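/- Fix β > 1, j > 0, ε > 0, α > 0, and let m₁, m₂ : [−ε⁻¹, ε⁻¹] → [−m_β, m_β] be bounded measurable. Define [H(m)](x) = −jε ∫₀ˣ dy/χ_β(m(y)) and the weighted norm ‖f‖_{ε,α} = sup_{|x| ≤ ε⁻¹} e^{−αε|x|} |f(x)|. Then ‖H(m₂) − H(m₁)‖_{ε,α} ≤ (2βj / (α χ_β(m_β)²)) ‖m₂ − m₁‖_{ε,α}. -/

import Mathlib

open MeasureTheory

lemma helper14 (c K t : ℝ) (hc : 0 < c) (hK : 0 ≤ K) (ht : 0 ≤ t)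
    (g : ℝ → ℝ) (hg : Measurable g)
    (hb : ∀ y ∈ Set.Icc (0:ℝ) t, |g y| ≤ K * Real.exp (c * y)) :
    |∫ y in (0:ℝ)..t, g y| ≤ K * Real.exp (c * t) / c := by
  have hgi : IntervalIntegrable g volume 0 t := by
    rw [intervalIntegrable_iff, Set.uIoc_of_le ht]
    refine Integrable.mono' (g := fun _ => K * Real.exp (c*t)) (integrableOn_const measure_Ioc_lt_top.ne)
      hg.aestronglyMeasurable ?_
    refine (ae_restrict_iff' measurableSet_Ioc).2 (Filter.Eventually.of_forall fun y hy => ?_)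
    have h1 : |g y| ≤ K * Real.exp (c * y) := hb y ⟨hy.1.le, hy.2⟩
    have h2 : Real.exp (c * y) ≤ Real.exp (c * t) := by
      exact Real.exp_le_exp.2 (mul_le_mul_of_nonneg_left hy.2 hc.le)
    calc ‖g y‖ = |g y| := rfl
      _ ≤ K * Real.exp (c * y) := h1
      _ ≤ K * Real.exp (c * t) := by nlinarith
  have hexpi : IntervalIntegrable (fun y => K * Real.exp (c * y)) volume 0 t :=
    Continuous.intervalIntegrable (by continuity) 0 t
  have h1 : |∫ y in (0:ℝ)..t, g y| ≤ ∫ y in (0:ℝ)..t, |g y| :=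
    intervalIntegral.abs_integral_le_integral_abs ht
  have h2 : (∫ y in (0:ℝ)..t, |g y|) ≤ ∫ y in (0:ℝ)..t, K * Real.exp (c * y) :=
    intervalIntegral.integral_mono_on ht hgi.abs hexpi hb
  have h3 : (∫ y in (0:ℝ)..t, K * Real.exp (c * y)) = K * (c⁻¹ * (Real.exp (c * t) - 1)) := by
    rw [intervalIntegral.integral_const_mul]
    rw [intervalIntegral.integral_comp_mul_left Real.exp hc.ne']
    simp [integral_exp, smul_eq_mul]
  have h4 : K * (c⁻¹ * (Real.exp (c * t) - 1)) ≤ K * Real.exp (c * t) / c := by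
    rw [div_eq_mul_inv]
    have : c⁻¹ * (Real.exp (c * t) - 1) ≤ Real.exp (c * t) * c⁻¹ := by
      rw [mul_comm]
      exact mul_le_mul_of_nonneg_right (by linarith [Real.exp_pos (c*t)]) (inv_nonneg.2 hc.le)
    nlinarith [mul_le_mul_of_nonneg_left this hK]
  linarith


/-- Lipschitz bound for `H(m)(x) = −jε ∫₀ˣ dy/χ_β(m(y))` in the weighted norm
`‖f‖_{ε,α} = sup_{|x|≤ε⁻¹} e^{−αε|x|}|f(x)|`:
`‖H(m₂) − H(m₁)‖_{ε,α} ≤ (2βj/(α χ_β(m_β)²)) ‖m₂ − m₁‖_{ε,α}`.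
Here `χ_β(m) = β(1−m²)` and `m_β ∈ (0,1)` solves `tanh(βm) = m`. -/
theorem stmt_14
    (β j ε α : ℝ) (hβ : 1 < β) (hj : 0 < j) (hε : 0 < ε) (hα : 0 < α)
    (mβ : ℝ) (hmβ : mβ ∈ Set.Ioo (0:ℝ) 1) (hmβeq : Real.tanh (β * mβ) = mβ)
    (m₁ m₂ : ℝ → ℝ) (hm₁ : Measurable m₁) (hm₂ : Measurable m₂)
    (hm₁r : ∀ x ∈ Set.Icc (-ε⁻¹) ε⁻¹, m₁ x ∈ Set.Icc (-mβ) mβ)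
    (hm₂r : ∀ x ∈ Set.Icc (-ε⁻¹) ε⁻¹, m₂ x ∈ Set.Icc (-mβ) mβ) :
    (⨆ x ∈ Set.Icc (-ε⁻¹) ε⁻¹,
        Real.exp (-(α * ε * |x|)) *
          |(-(j * ε) * ∫ y in (0:ℝ)..x, 1 / (β * (1 - (m₂ y) ^ 2)))
            - (-(j * ε) * ∫ y in (0:ℝ)..x, 1 / (β * (1 - (m₁ y) ^ 2)))|)
      ≤ (2 * β * j / (α * (β * (1 - mβ ^ 2)) ^ 2)) *
        ⨆ x ∈ Set.Icc (-ε⁻¹) ε⁻¹, Real.exp (-(α * ε * |x|)) * |m₂ x - m₁ x| := by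
  have hβ0 : 0 < β := by linarith
  have hεinv : 0 < ε⁻¹ := inv_pos.2 hε
  obtain ⟨hmβ1, hmβ2⟩ := hmβ
  set S : Set ℝ := Set.Icc (-ε⁻¹) ε⁻¹ with hS
  set χ : ℝ := β * (1 - mβ ^ 2) with hχdef
  have hχ : 0 < χ := by
    rw [hχdef]
    nlinarith [mul_pos hβ0 (mul_pos (sub_pos.2 hmβ2) (show (0:ℝ) < 1 + mβ by linarith))]
  set c : ℝ := α * ε with hcdef
  have hc : 0 < c := mul_pos hα hε
  set K : ℝ := 2 * β / χ ^ 2 with hKdef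
  have hK : 0 ≤ K := by
    rw [hKdef]; exact div_nonneg (by linarith) (sq_nonneg χ)
  set N : ℝ := ⨆ x ∈ S, Real.exp (-(α * ε * |x|)) * |m₂ x - m₁ x| with hNdef
  set C : ℝ := 2 * β * j / (α * χ ^ 2) with hCdef
  have hC : 0 ≤ C := by
    rw [hCdef]
    exact div_nonneg (by nlinarith) (mul_nonneg hα.le (sq_nonneg χ))
  have hterm_nonneg : ∀ x : ℝ, 0 ≤ Real.exp (-(α * ε * |x|)) * |m₂ x - m₁ x| :=
    fun x => mul_nonneg (Real.exp_pos _).le (abs_nonneg _)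
  have hterm_bdd : ∀ x : ℝ,
      (⨆ _ : x ∈ S, Real.exp (-(α * ε * |x|)) * |m₂ x - m₁ x|) ≤ 2 * mβ := by
    intro x
    refine Real.iSup_le (fun hx => ?_) (by linarith)
    obtain ⟨a1, a2⟩ := hm₁r x hx
    obtain ⟨b1, b2⟩ := hm₂r x hx
    have hb : |m₂ x - m₁ x| ≤ 2 * mβ := by
      rw [abs_sub_le_iff]; exact ⟨by linarith, by linarith⟩
    have he : Real.exp (-(α * ε * |x|)) ≤ 1 := by
      rw [Real.exp_le_one_iff]
      have : 0 ≤ α * ε * |x| := by positivity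
      linarith
    calc Real.exp (-(α * ε * |x|)) * |m₂ x - m₁ x| ≤ 1 * (2 * mβ) :=
          mul_le_mul he hb (abs_nonneg _) zero_le_one
      _ = 2 * mβ := one_mul _
  have hbdd : BddAbove (Set.range fun x =>
      ⨆ _ : x ∈ S, Real.exp (-(α * ε * |x|)) * |m₂ x - m₁ x|) :=
    ⟨2 * mβ, Set.forall_mem_range.2 hterm_bdd⟩
  have hN0 : 0 ≤ N :=
    Real.iSup_nonneg fun x => Real.iSup_nonneg fun _ => hterm_nonneg x
  have hΔ : ∀ y ∈ S, |m₂ y - m₁ y| ≤ Real.exp (α * ε * |y|) * N := by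
    intro y hy
    have h1 : Real.exp (-(α * ε * |y|)) * |m₂ y - m₁ y| ≤ N := by
      have := le_ciSup hbdd y
      rwa [ciSup_pos hy] at this
    have h2 := mul_le_mul_of_nonneg_left h1 (Real.exp_pos (α * ε * |y|)).le
    calc |m₂ y - m₁ y|
        = Real.exp (α * ε * |y|) * (Real.exp (-(α * ε * |y|)) * |m₂ y - m₁ y|) := by
          rw [← mul_assoc, ← Real.exp_add]; simp
      _ ≤ Real.exp (α * ε * |y|) * N := h2
  set g : ℝ → ℝ := fun y => 1 / (β * (1 - (m₂ y) ^ 2)) - 1 / (β * (1 - (m₁ y) ^ 2)) with hgdef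
  have hφm : ∀ (m : ℝ → ℝ), Measurable m →
      Measurable (fun y => 1 / (β * (1 - (m y) ^ 2))) := fun m hm =>
    measurable_const.div ((measurable_const.sub (hm.pow_const 2)).const_mul β)
  have hgm : Measurable g := (hφm m₂ hm₂).sub (hφm m₁ hm₁)
  have hden : ∀ (m : ℝ → ℝ), (∀ x ∈ S, m x ∈ Set.Icc (-mβ) mβ) → ∀ y ∈ S,
      χ ≤ β * (1 - (m y) ^ 2) := by
    intro m hmr y hy
    obtain ⟨h1, h2⟩ := hmr y hy
    rw [hχdef]
    have hsq : m y ^ 2 ≤ mβ ^ 2 := by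
      nlinarith [mul_nonneg (sub_nonneg.2 h2) (show 0 ≤ mβ + m y by linarith)]
    nlinarith [mul_le_mul_of_nonneg_left hsq hβ0.le]
  have hb : ∀ y ∈ S, |g y| ≤ K * N * Real.exp (α * ε * |y|) := by
    intro y hy
    have hd2 : χ ≤ β * (1 - (m₂ y) ^ 2) := hden m₂ hm₂r y hy
    have hd1 : χ ≤ β * (1 - (m₁ y) ^ 2) := hden m₁ hm₁r y hy
    have hd2p : 0 < β * (1 - (m₂ y) ^ 2) := lt_of_lt_of_le hχ hd2
    have hd1p : 0 < β * (1 - (m₁ y) ^ 2) := lt_of_lt_of_le hχ hd1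
    have hφ : |g y| ≤ K * |m₂ y - m₁ y| := by
      have heq : g y = (β * ((m₂ y - m₁ y) * (m₂ y + m₁ y))) /
          ((β * (1 - (m₂ y) ^ 2)) * (β * (1 - (m₁ y) ^ 2))) := by
        rw [hgdef]
        beta_reduce
        rw [div_sub_div _ _ hd2p.ne' hd1p.ne']
        ring
      rw [heq, abs_div]
      have hsum : |m₂ y + m₁ y| ≤ 2 := by
        obtain ⟨a1, a2⟩ := hm₁r y hy
        obtain ⟨b1, b2⟩ := hm₂r y hy
        rw [abs_le]; exact ⟨by linarith, by linarith⟩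
      have hnum : |β * ((m₂ y - m₁ y) * (m₂ y + m₁ y))| ≤ 2 * β * |m₂ y - m₁ y| := by
        rw [abs_mul, abs_mul, abs_of_pos hβ0]
        calc β * (|m₂ y - m₁ y| * |m₂ y + m₁ y|) ≤ β * (|m₂ y - m₁ y| * 2) := by
              apply mul_le_mul_of_nonneg_left _ hβ0.le
              exact mul_le_mul_of_nonneg_left hsum (abs_nonneg _)
          _ = 2 * β * |m₂ y - m₁ y| := by ring
      have hdenb : χ ^ 2 ≤ |(β * (1 - (m₂ y) ^ 2)) * (β * (1 - (m₁ y) ^ 2))| := by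
        rw [abs_of_pos (mul_pos hd2p hd1p), sq]
        exact mul_le_mul hd2 hd1 hχ.le hd2p.le
      calc |β * ((m₂ y - m₁ y) * (m₂ y + m₁ y))| /
            |(β * (1 - (m₂ y) ^ 2)) * (β * (1 - (m₁ y) ^ 2))|
          ≤ (2 * β * |m₂ y - m₁ y|) / χ ^ 2 :=
            div_le_div₀ (by positivity) hnum (by positivity) hdenb
        _ = K * |m₂ y - m₁ y| := by rw [hKdef]; ring
    calc |g y| ≤ K * |m₂ y - m₁ y| := hφ
      _ ≤ K * (Real.exp (α * ε * |y|) * N) :=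
          mul_le_mul_of_nonneg_left (hΔ y hy) hK
      _ = K * N * Real.exp (α * ε * |y|) := by ring
  have hii : ∀ (m : ℝ → ℝ), Measurable m → (∀ x ∈ S, m x ∈ Set.Icc (-mβ) mβ) →
      ∀ x ∈ S, IntervalIntegrable (fun y => 1 / (β * (1 - (m y) ^ 2))) volume 0 x := by
    intro m hm hmr x hx
    obtain ⟨hxa, hxb⟩ := hx
    rw [intervalIntegrable_iff]
    refine Integrable.mono' (g := fun _ => 1 / χ)
      (integrableOn_const measure_Ioc_lt_top.ne)
      ((hφm m hm).aestronglyMeasurable) ?_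
    refine (ae_restrict_iff' measurableSet_uIoc).2 (Filter.Eventually.of_forall fun y hy => ?_)
    have hyS : y ∈ S := by
      rcases Set.mem_uIoc.1 hy with ⟨h1, h2⟩ | ⟨h1, h2⟩ <;>
        exact ⟨by linarith, by linarith⟩
    have hd : χ ≤ β * (1 - (m y) ^ 2) := hden m hmr y hyS
    have hdp : 0 < β * (1 - (m y) ^ 2) := lt_of_lt_of_le hχ hd
    rw [Real.norm_eq_abs, abs_of_pos (by positivity)]
    exact one_div_le_one_div_of_le hχ hd
  have key : ∀ x ∈ S, |∫ y in (0:ℝ)..x, g y| ≤ K * N * Real.exp (c * |x|) / c := by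
    intro x hx
    obtain ⟨hxa, hxb⟩ := hx
    have hKN : 0 ≤ K * N := mul_nonneg hK hN0
    rcases le_or_gt 0 x with hx0 | hx0
    · rw [abs_of_nonneg hx0]
      refine helper14 c (K * N) x hc hKN hx0 g hgm fun y hy => ?_
      have hyS : y ∈ S := ⟨by linarith [hy.1], by linarith [hy.2]⟩
      have h := hb y hyS
      rw [abs_of_nonneg hy.1] at h
      rwa [hcdef]
    · have h1 : (∫ y in (0:ℝ)..(-x), g (-y)) = ∫ y in x..0, g y := by
        simpa using intervalIntegral.integral_comp_neg (a := (0:ℝ)) (b := -x) g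
      have hsym : |∫ y in (0:ℝ)..x, g y| = |∫ y in (0:ℝ)..(-x), g (-y)| := by
        rw [h1, intervalIntegral.integral_symm x 0, abs_neg]
      rw [hsym, abs_of_neg hx0]
      refine helper14 c (K * N) (-x) hc hKN (by linarith) (fun y => g (-y))
        (hgm.comp measurable_neg) fun y hy => ?_
      have hyS : (-y) ∈ S := ⟨by linarith [hy.2], by linarith [hy.1]⟩
      have h := hb (-y) hyS
      rw [abs_neg, abs_of_nonneg hy.1] at h
      rwa [hcdef]
  have hpoint : ∀ x ∈ S,
      Real.exp (-(α * ε * |x|)) *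
        |(-(j * ε) * ∫ y in (0:ℝ)..x, 1 / (β * (1 - (m₂ y) ^ 2)))
          - (-(j * ε) * ∫ y in (0:ℝ)..x, 1 / (β * (1 - (m₁ y) ^ 2)))| ≤ C * N := by
    intro x hx
    have hsub : (∫ y in (0:ℝ)..x, 1 / (β * (1 - (m₂ y) ^ 2)))
        - (∫ y in (0:ℝ)..x, 1 / (β * (1 - (m₁ y) ^ 2))) = ∫ y in (0:ℝ)..x, g y :=
      (intervalIntegral.integral_sub (hii m₂ hm₂ hm₂r x hx) (hii m₁ hm₁ hm₁r x hx)).symm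
    have habs : |(-(j * ε) * ∫ y in (0:ℝ)..x, 1 / (β * (1 - (m₂ y) ^ 2)))
        - (-(j * ε) * ∫ y in (0:ℝ)..x, 1 / (β * (1 - (m₁ y) ^ 2)))|
        = (j * ε) * |∫ y in (0:ℝ)..x, g y| := by
      rw [show (-(j * ε) * ∫ y in (0:ℝ)..x, 1 / (β * (1 - (m₂ y) ^ 2)))
          - (-(j * ε) * ∫ y in (0:ℝ)..x, 1 / (β * (1 - (m₁ y) ^ 2)))
          = -(j * ε) * ((∫ y in (0:ℝ)..x, 1 / (β * (1 - (m₂ y) ^ 2)))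
            - ∫ y in (0:ℝ)..x, 1 / (β * (1 - (m₁ y) ^ 2))) from by ring]
      rw [hsub, abs_mul, abs_neg, abs_of_pos (mul_pos hj hε)]
    rw [habs]
    have hkey := key x hx
    have hmul := mul_le_mul_of_nonneg_left
      (mul_le_mul_of_nonneg_left hkey (mul_pos hj hε).le) (Real.exp_pos (-(α * ε * |x|))).le
    calc Real.exp (-(α * ε * |x|)) * ((j * ε) * |∫ y in (0:ℝ)..x, g y|)
        ≤ Real.exp (-(α * ε * |x|)) * ((j * ε) * (K * N * Real.exp (c * |x|) / c)) := hmul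
      _ = C * N := by
          rw [hcdef, hKdef, hCdef, Real.exp_neg]
          field_simp
  refine Real.iSup_le (fun x => Real.iSup_le (fun hx => hpoint x hx) ?_) ?_ <;>
    exact mul_nonneg hC hN0
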